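/- There exist two distinct synchronous relations R₀ and R₁ over Σ = {a,b} (namely R_i = {(u,v) : |u| > |v| and |u|−|v| ≡ i mod p} for fixed p ≥ 2) such that R₁ is a group relation, R₀ is not a group relation, yet R₀ and R₁ are recognized by the same finite naive synchronous algebra (synchronous algebra without dependency relation). -/

import Mathlib

/-- The paired alphabet `Σ₂⊥ = (Σ×Σ) ⊕ (Σ×{⊥}) ⊕ ({⊥}×Σ)`. -/
def PL (α : Type) : Type := (α × α) ⊕ α ⊕ α

/-- Well-formed words over `Σ₂⊥`. -/
def WF {α : Type} (l : List (PL α)) : Prop :=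
  ∃ (w : List (α × α)) (s : List α),
    l = w.map Sum.inl ++ s.map (fun a => Sum.inr (Sum.inl a)) ∨
    l = w.map Sum.inl ++ s.map (fun a => Sum.inr (Sum.inr a))

/-- Decode a word over `Σ₂⊥` into the pair of words it represents. -/
def decodeW {α : Type} (l : List (PL α)) : List α × List α :=
  (l.filterMap (fun x => match x with
      | Sum.inl p => some p.1
      | Sum.inr (Sum.inl a) => some a
      | Sum.inr (Sum.inr _) => none),
   l.filterMap (fun x => match x with
      | Sum.inl p => some p.2
      | Sum.inr (Sum.inl _) => none
      | Sum.inr (Sum.inr a) => some a))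

/-- A relation `R ⊆ α* × α*` is a group relation when there are a finite group
`G`, a monoid morphism `ψ : (Σ₂⊥)* → G` and `Acc ⊆ G` such that every
well-formed word encodes a pair of `R` iff its image under `ψ` lies in `Acc`. -/
def IsGroupRel {α : Type} (R : Set (List α × List α)) : Prop :=
  ∃ (G : Type) (_ : Group G) (_ : Finite G) (ψ : FreeMonoid (PL α) →* G)
    (Acc : Set G),
    ∀ l : List (PL α), WF l → (decodeW l ∈ R ↔ ψ (FreeMonoid.ofList l) ∈ Acc)

/-- The relation `R^{I,J}`: pairs `(u,v)` with `|u| > |v|` and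
`|u| − |v| mod p ∈ I`, or `|u| < |v|` and `|v| − |u| mod q ∈ J`. -/
def RIJ (α : Type) (p q : ℕ) (I : Set (ZMod p)) (J : Set (ZMod q)) :
    Set (List α × List α) :=
  { uv | (uv.2.length < uv.1.length ∧
            ((uv.1.length - uv.2.length : ℕ) : ZMod p) ∈ I) ∨
         (uv.1.length < uv.2.length ∧
            ((uv.2.length - uv.1.length : ℕ) : ZMod q) ∈ J) }

/-- Letter-types. -/
inductive LTy | l | p | q
deriving DecidableEq

/-- The five types of nonempty well-formed synchronous words. -/
inductive STy | ll | lllb | lb | llbl | bl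
deriving DecidableEq

namespace STy

def src : STy → LTy
  | ll => .l | lllb => .l | lb => .p | llbl => .l | bl => .q

def tgt : STy → LTy
  | ll => .l | lllb => .p | lb => .p | llbl => .q | bl => .q

/-- Compatibility of types. -/
def compat (σ τ : STy) : Prop := σ.tgt = τ.src ∨ σ.tgt = LTy.l

/-- Product of compatible types (junk on incompatible pairs). -/
def comp : STy → STy → STy
  | ll, ll => ll
  | ll, lllb => lllb
  | ll, lb => lllb
  | ll, llbl => llbl
  | ll, bl => llbl
  | lllb, _ => lllb
  | lb, _ => lb
  | llbl, _ => llbl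
  | bl, _ => bl

end STy

/-- Extended compatibility over `T ∪ {1}` (type `1` modelled by `none`). -/
def ncompat : Option STy → Option STy → Prop
  | none, _ => True
  | _, none => True
  | some σ, some τ => σ.compat τ

/-- Extended type product over `T ∪ {1}`. -/
def ncomp : Option STy → Option STy → Option STy
  | none, τ => τ
  | σ, none => σ
  | some σ, some τ => some (σ.comp τ)

/-- A naive synchronous algebra: a typed set over `T ∪ {1}` with an associative
partial product defined exactly on compatible pairs and a unique element of
type `1` which is a two-sided identity.  There is no dependency relation. -/
structure NaiveSyncAlg where
  A : Type
  ty : A → Option STy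
  mul : A → A → Option A
  one : A
  ty_one : ty one = none
  one_unique : ∀ x, ty x = none → x = one
  mul_defined : ∀ x y, (mul x y).isSome ↔ ncompat (ty x) (ty y)
  ty_mul : ∀ {x y z}, mul x y = some z → ty z = ncomp (ty x) (ty y)
  mul_assoc : ∀ x y z,
    (mul x y).bind (fun a => mul a z) = (mul y z).bind (fun b => mul x b)
  one_mul : ∀ x, mul one x = some x
  mul_one : ∀ x, mul x one = some x

/-- Synchronous words over `α`. -/
inductive SyncW (α : Type) : Type
  | wll : List (α × α) → SyncW α
  | wlllb : List (α × α) → List α → SyncW α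
  | wlb : List α → SyncW α
  | wllbl : List (α × α) → List α → SyncW α
  | wbl : List α → SyncW α

namespace SyncW

variable {α : Type}

/-- Concatenation of synchronous words (partial). -/
def mul : SyncW α → SyncW α → Option (SyncW α)
  | wll w, wll w' => some (wll (w ++ w'))
  | wll w, wlllb w' s => some (wlllb (w ++ w') s)
  | wll w, wlb s => some (wlllb w s)
  | wll w, wllbl w' s => some (wllbl (w ++ w') s)
  | wll w, wbl s => some (wllbl w s)
  | wlllb w s, wlb s' => some (wlllb w (s ++ s'))
  | wlb s, wlb s' => some (wlb (s ++ s'))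
  | wllbl w s, wbl s' => some (wllbl w (s ++ s'))
  | wbl s, wbl s' => some (wbl (s ++ s'))
  | _, _ => none

/-- Decoding into the represented pair of words. -/
def decode : SyncW α → List α × List α
  | wll w => (w.map Prod.fst, w.map Prod.snd)
  | wlllb w s => (w.map Prod.fst ++ s, w.map Prod.snd)
  | wlb s => (s, [])
  | wllbl w s => (w.map Prod.fst, w.map Prod.snd ++ s)
  | wbl s => ([], s)

/-- The naive type in `T ∪ {1}` of a synchronous word, determined by its
content: empty words have type `1`, and nonempty words get the type of their
underlying well-formed word. -/
def nty : SyncW α → Option STy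
  | wll [] => none
  | wll _ => some .ll
  | wlllb [] [] => none
  | wlllb [] _ => some .lb
  | wlllb _ [] => some .ll
  | wlllb _ _ => some .lllb
  | wlb [] => none
  | wlb _ => some .lb
  | wllbl [] [] => none
  | wllbl [] _ => some .bl
  | wllbl _ [] => some .ll
  | wllbl _ _ => some .llbl
  | wbl [] => none
  | wbl _ => some .bl

end SyncW

/-- The subset of `Sync(α)` induced by a relation. -/
def projS {α : Type} (R : Set (List α × List α)) : Set (SyncW α) :=
  { x | x.decode ∈ R }

/-- The relation `{(u,v) : |u| > |v| and |u| − |v| ≡ i mod p}`. -/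
def Rmod (p : ℕ) (i : ZMod p) : Set (List Bool × List Bool) :=
  { uv | uv.2.length < uv.1.length ∧
      ((uv.1.length - uv.2.length : ℕ) : ZMod p) = i }

/-- The witnessing finite naive algebra: singletons at `ll`, `bl`, `llbl`,
`ZMod p` at `lb` and `lllb`, plus a unit. -/
inductive NA (p : ℕ) : Type
  | one | ell | bl | llbl
  | lb (k : ZMod p) | lllb (k : ZMod p)
deriving DecidableEq

namespace NA

def ty {p : ℕ} : NA p → Option STy
  | one => none
  | ell => some .ll
  | bl => some .bl
  | llbl => some .llbl
  | lb _ => some .lb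
  | lllb _ => some .lllb

def mul {p : ℕ} : NA p → NA p → Option (NA p)
  | one, x => some x
  | x, one => some x
  | ell, ell => some ell
  | ell, bl => some llbl
  | ell, llbl => some llbl
  | ell, lb k => some (lllb k)
  | ell, lllb k => some (lllb k)
  | lb k, lb j => some (lb (k + j))
  | lllb k, lb j => some (lllb (k + j))
  | llbl, bl => some llbl
  | bl, bl => some bl
  | _, _ => none

instance (p : ℕ) [NeZero p] : Finite (NA p) := by
  have : Function.Surjective (fun x : (Option (ZMod p)) × (Fin 3) × (ZMod p) × (ZMod p) =>
    match x with
    | (none, ⟨0,_⟩, _, _) => (NA.one : NA p)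
    | (none, ⟨1,_⟩, _, _) => NA.ell
    | (none, ⟨2,_⟩, _, _) => NA.bl
    | (some _, ⟨0,_⟩, _, _) => NA.llbl
    | (some _, ⟨1,_⟩, k, _) => NA.lb k
    | (some _, ⟨2,_⟩, _, k) => NA.lllb k) := by
    intro x
    cases x with
    | one => exact ⟨(none, ⟨0, by omega⟩, 0, 0), rfl⟩
    | ell => exact ⟨(none, ⟨1, by omega⟩, 0, 0), rfl⟩
    | bl => exact ⟨(none, ⟨2, by omega⟩, 0, 0), rfl⟩
    | llbl => exact ⟨(some 0, ⟨0, by omega⟩, 0, 0), rfl⟩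
    | lb k => exact ⟨(some 0, ⟨1, by omega⟩, k, 0), rfl⟩
    | lllb k => exact ⟨(some 0, ⟨2, by omega⟩, 0, k), rfl⟩
  exact Finite.of_surjective _ this

end NA

def theAlg (p : ℕ) : NaiveSyncAlg where
  A := NA p
  ty := NA.ty
  mul := NA.mul
  one := NA.one
  ty_one := rfl
  one_unique := by intro x h; cases x <;> simp [NA.ty] at h ⊢
  mul_defined := by
    intro x y
    cases x <;> cases y <;>
      simp [NA.mul, NA.ty, ncompat, STy.compat, STy.src, STy.tgt]
  ty_mul := by
    intro x y z h
    cases x <;> cases y <;> simp [NA.mul] at h <;> subst h <;> rfl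
  mul_assoc := by
    intro x y z
    cases x <;> cases y <;> cases z <;> simp [NA.mul] <;> ring
  one_mul := by intro x; cases x <;> rfl
  mul_one := by intro x; cases x <;> rfl
def fmap (p : ℕ) : SyncW Bool → NA p
  | .wll [] => .one
  | .wll (_::_) => .ell
  | .wlllb [] [] => .one
  | .wlllb [] (a::s) => .lb (a::s : List Bool).length
  | .wlllb (_::_) [] => .ell
  | .wlllb (_::_) (a::s) => .lllb (a::s : List Bool).length
  | .wlb [] => .one
  | .wlb (a::s) => .lb (a::s : List Bool).length
  | .wllbl [] [] => .one
  | .wllbl [] (_::_) => .bl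
  | .wllbl (_::_) [] => .ell
  | .wllbl (_::_) (_::_) => .llbl
  | .wbl [] => .one
  | .wbl (_::_) => .bl

lemma fmap_ty (p : ℕ) (x : SyncW Bool) : NA.ty (fmap p x) = x.nty := by
  rcases x with w | ⟨w, s⟩ | s | ⟨w, s⟩ | s <;>
    first
    | (rcases w with _ | ⟨a, w⟩ <;> rcases s with _ | ⟨b, s⟩ <;> rfl)
    | (rcases w with _ | ⟨a, w⟩ <;> rfl)
    | (rcases s with _ | ⟨b, s⟩ <;> rfl)

lemma fmap_mul (p : ℕ) (x y z : SyncW Bool) (h : SyncW.mul x y = some z) :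
    NA.mul (fmap p x) (fmap p y) = some (fmap p z) := by
  rcases x with w | ⟨w, s⟩ | s | ⟨w, s⟩ | s <;>
    rcases y with w' | ⟨w', s'⟩ | s' | ⟨w', s'⟩ | s' <;>
    simp only [SyncW.mul, Option.some.injEq, reduceCtorEq] at h <;>
    subst h <;>
    (try rcases w with _ | ⟨a, w⟩) <;> (try rcases s with _ | ⟨b, s⟩) <;>
    (try rcases w' with _ | ⟨a', w'⟩) <;> (try rcases s' with _ | ⟨b', s'⟩) <;>
    simp [fmap, NA.mul, List.length_append] <;> push_cast <;> ring
def AccI (p : ℕ) (i : ZMod p) : Set (NA p) := {a | a = .lb i ∨ a = .lllb i}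

lemma projS_eq (p : ℕ) (i : ZMod p) :
    projS (Rmod p i) = fmap p ⁻¹' AccI p i := by
  ext x
  rcases x with w | ⟨w, s⟩ | s | ⟨w, s⟩ | s <;>
    (try rcases w with _ | ⟨a, w⟩) <;> (try rcases s with _ | ⟨b, s⟩) <;>
    simp [projS, Rmod, SyncW.decode, fmap, AccI, Set.mem_setOf_eq,
      List.length_append, List.length_map, Nat.add_sub_cancel_left]
/-- The letter weight used in the group morphism for `R₁`. -/
def gwt (p : ℕ) : PL Bool → Multiplicative (ZMod p × ZMod p)
  | Sum.inl _ => 1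
  | Sum.inr (Sum.inl _) => Multiplicative.ofAdd (1, 0)
  | Sum.inr (Sum.inr _) => Multiplicative.ofAdd (0, 1)

lemma gwt_prod_inl (p : ℕ) (w : List (Bool × Bool)) :
    ((w.map Sum.inl).map (gwt p)).prod = 1 := by
  induction w with
  | nil => rfl
  | cons a t ih =>
      simp only [List.map_cons, List.prod_cons]
      show gwt p (Sum.inl a) * ((t.map Sum.inl).map (gwt p)).prod = 1
      rw [show gwt p (Sum.inl a) = 1 from rfl, one_mul]
      exact ih

lemma gwt_prod_padL (p : ℕ) (s : List Bool) :
    ((s.map (fun a => (Sum.inr (Sum.inl a) : PL Bool))).map (gwt p)).prod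
      = Multiplicative.ofAdd ((s.length : ZMod p), 0) := by
  induction s with
  | nil => simp; rfl
  | cons a t ih =>
      show (gwt p (Sum.inr (Sum.inl a)) :: (t.map (fun a => (Sum.inr (Sum.inl a) : PL Bool))).map (gwt p)).prod = _
      simp only [List.map_cons, List.prod_cons, ih, gwt, List.length_cons]
      rw [← ofAdd_add]
      congr 1
      simp [Prod.ext_iff, add_comm]
  
lemma gwt_prod_padR (p : ℕ) (s : List Bool) :
    ((s.map (fun a => (Sum.inr (Sum.inr a) : PL Bool))).map (gwt p)).prod
      = Multiplicative.ofAdd ((0 : ZMod p), (s.length : ZMod p)) := by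
  induction s with
  | nil => simp; rfl
  | cons a t ih =>
      show (gwt p (Sum.inr (Sum.inr a)) :: (t.map (fun a => (Sum.inr (Sum.inr a) : PL Bool))).map (gwt p)).prod = _
      simp only [List.map_cons, List.prod_cons, ih, gwt, List.length_cons]
      rw [← ofAdd_add]
      congr 1
      simp [Prod.ext_iff, add_comm]

lemma decodeW_padL (w : List (Bool × Bool)) (s : List Bool) :
    decodeW (w.map Sum.inl ++ s.map (fun a => (Sum.inr (Sum.inl a) : PL Bool)))
      = (w.map Prod.fst ++ s, w.map Prod.snd) := by
  change decodeW (w.map (β := PL Bool) Sum.inl ++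
    s.map (β := PL Bool) (fun a => Sum.inr (Sum.inl a))) = _
  induction w with
  | nil =>
      induction s with
      | nil => rfl
      | cons a t ih =>
          show (a :: (decodeW (([] : List (PL Bool)) ++ t.map (β := PL Bool) (fun a => Sum.inr (Sum.inl a)))).1, (decodeW (([] : List (PL Bool)) ++ t.map (β := PL Bool) (fun a => Sum.inr (Sum.inl a)))).2) = _
          erw [ih]; rfl
  | cons a t ih =>
      show (a.1 :: (decodeW (List.map (β := PL Bool) Sum.inl t ++ s.map (β := PL Bool) (fun a => Sum.inr (Sum.inl a)))).1, a.2 :: (decodeW (List.map (β := PL Bool) Sum.inl t ++ s.map (β := PL Bool) (fun a => Sum.inr (Sum.inl a)))).2) = _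
      rw [ih]; rfl

lemma decodeW_padR (w : List (Bool × Bool)) (s : List Bool) :
    decodeW (w.map Sum.inl ++ s.map (fun a => (Sum.inr (Sum.inr a) : PL Bool)))
      = (w.map Prod.fst, w.map Prod.snd ++ s) := by
  change decodeW (w.map (β := PL Bool) Sum.inl ++
    s.map (β := PL Bool) (fun a => Sum.inr (Sum.inr a))) = _
  induction w with
  | nil =>
      induction s with
      | nil => rfl
      | cons a t ih =>
          show ((decodeW (([] : List (PL Bool)) ++ t.map (β := PL Bool) (fun a => Sum.inr (Sum.inr a)))).1, a :: (decodeW (([] : List (PL Bool)) ++ t.map (β := PL Bool) (fun a => Sum.inr (Sum.inr a)))).2) = _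
          erw [ih]; rfl
  | cons a t ih =>
      show (a.1 :: (decodeW (List.map (β := PL Bool) Sum.inl t ++ s.map (β := PL Bool) (fun a => Sum.inr (Sum.inr a)))).1, a.2 :: (decodeW (List.map (β := PL Bool) Sum.inl t ++ s.map (β := PL Bool) (fun a => Sum.inr (Sum.inr a)))).2) = _
      rw [ih]; rfl

lemma lift_eq_prod (p : ℕ) (l : List (PL Bool)) :
    FreeMonoid.lift (gwt p) (FreeMonoid.ofList l) = (l.map (gwt p)).prod := by
  induction l with
  | nil => simp
  | cons a t ih =>
      rw [show FreeMonoid.ofList (a :: t) = FreeMonoid.of a * FreeMonoid.ofList t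
        from rfl, map_mul, ih]
      simp

lemma isGroupRel_one (p : ℕ) (hp : 2 ≤ p) : IsGroupRel (Rmod p 1) := by
  haveI : NeZero p := ⟨by omega⟩
  haveI : Fact (1 < p) := ⟨by omega⟩
  refine ⟨Multiplicative (ZMod p × ZMod p), inferInstance, inferInstance,
    FreeMonoid.lift (gwt p),
    {x | x = Multiplicative.ofAdd ((1 : ZMod p), (0 : ZMod p))}, ?_⟩
  rintro l ⟨w, s, h | h⟩ <;> subst h
  · erw [decodeW_padL, lift_eq_prod, List.map_append, List.prod_append,
      gwt_prod_inl, gwt_prod_padL, one_mul]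
    simp only [Rmod, Set.mem_setOf_eq, List.length_append, List.length_map,
      Nat.add_sub_cancel_left]
    constructor
    · rintro ⟨-, h2⟩
      exact h2 ▸ rfl
    · intro h
      have h1 : (s.length : ZMod p) = 1 := by
        have := congrArg Multiplicative.toAdd h
        simpa using congrArg Prod.fst this
      refine ⟨?_, h1⟩
      rcases Nat.eq_zero_or_pos s.length with h0 | h0
      · exfalso; rw [h0] at h1
        exact one_ne_zero ((by simpa using h1.symm) : (1 : ZMod p) = 0)
      · omega
  · erw [decodeW_padR, lift_eq_prod, List.map_append, List.prod_append,
      gwt_prod_inl, gwt_prod_padR, one_mul]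
    simp only [Rmod, Set.mem_setOf_eq, List.length_append, List.length_map]
    constructor
    · rintro ⟨h1, -⟩; omega
    · intro h
      have h1 : (0 : ZMod p) = 1 := by
        have := congrArg Multiplicative.toAdd h
        simpa using congrArg Prod.fst this
      exact absurd h1 zero_ne_one
lemma decodeW_rep (k : ℕ) :
    decodeW (List.replicate k (Sum.inr (Sum.inl true) : PL Bool))
      = (List.replicate k true, []) := by
  have := decodeW_padL [] (List.replicate k true)
  simp [List.map_replicate] at this
  exact this

lemma not_isGroupRel_zero (p : ℕ) (hp : 2 ≤ p) : ¬ IsGroupRel (Rmod p 0) := by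
  rintro ⟨G, _, _, ψ, Acc, h⟩
  set g : G := ψ (FreeMonoid.ofList [Sum.inr (Sum.inl true)]) with hg
  have hn : 0 < orderOf g := orderOf_pos g
  have hrep : ∀ k, ψ (FreeMonoid.ofList
      (List.replicate k (Sum.inr (Sum.inl true) : PL Bool))) = g ^ k := by
    intro k
    induction k with
    | zero => simpa using map_one ψ
    | succ n ih =>
        erw [List.replicate_succ]
        calc ψ (FreeMonoid.ofList ((Sum.inr (Sum.inl true) : PL Bool) ::
              List.replicate n (Sum.inr (Sum.inl true))))
            = ψ (FreeMonoid.ofList [(Sum.inr (Sum.inl true) : PL Bool)] *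
              FreeMonoid.ofList (List.replicate n (Sum.inr (Sum.inl true)))) := rfl
          _ = g * g ^ n := by
                erw [map_mul]; exact congrArg₂ (· * ·) rfl ih
          _ = g ^ (n + 1) := (pow_succ' g n).symm
  have wf : ∀ k, WF (List.replicate k (Sum.inr (Sum.inl true) : PL Bool)) := by
    intro k
    exact ⟨[], List.replicate k true, Or.inl (by simp [List.map_replicate]; rfl)⟩
  have h0 := h _ (wf 0)
  have h1 := h _ (wf (orderOf g * p))
  rw [decodeW_rep, hrep] at h0 h1
  haveI : NeZero p := ⟨by omega⟩
  have hin : (List.replicate (orderOf g * p) true, ([] : List Bool)) ∈ Rmod p 0 := by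
    constructor
    · simp only [List.length_replicate, List.length_nil]
      positivity
    · simp [List.length_replicate]
  have hout : (List.replicate 0 true, ([] : List Bool)) ∉ Rmod p 0 := by
    simp [Rmod]
  rw [h1] at hin
  rw [pow_mul, pow_orderOf_eq_one, one_pow] at hin
  rw [pow_zero] at h0
  exact hout (h0.mpr hin)
/-- For `p ≥ 2`, the two distinct relations
`R_i = {(u,v) : |u| > |v|, |u|−|v| ≡ i mod p}` (`i = 0, 1`) over `Σ = {a,b}`
are such that `R₁` is a group relation, `R₀` is not, and yet both are recognized
by one and the same finite naive synchronous algebra (via a map from synchronous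
words preserving naive types and products). -/
theorem naive_algebras_cannot_characterize_group_relations
    (p : ℕ) (hp : 2 ≤ p) :
    Rmod p 0 ≠ Rmod p 1 ∧
    IsGroupRel (Rmod p 1) ∧
    ¬ IsGroupRel (Rmod p 0) ∧
    ∃ (N : NaiveSyncAlg) (_ : Finite N.A) (f : SyncW Bool → N.A),
      (∀ x, N.ty (f x) = x.nty) ∧
      (∀ x y z : SyncW Bool,
        SyncW.mul x y = some z → N.mul (f x) (f y) = some (f z)) ∧
      ∃ Acc₀ Acc₁ : Set N.A,
        projS (Rmod p 0) = f ⁻¹' Acc₀ ∧ projS (Rmod p 1) = f ⁻¹' Acc₁ := by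
  haveI : NeZero p := ⟨by omega⟩
  haveI : Fact (1 < p) := ⟨by omega⟩
  refine ⟨?_, isGroupRel_one p hp, not_isGroupRel_zero p hp,
    theAlg p, inferInstanceAs (Finite (NA p)), fmap p, fmap_ty p, fmap_mul p,
    AccI p 0, AccI p 1, projS_eq p 0, projS_eq p 1⟩
  intro hEq
  have h1 : ([true], ([] : List Bool)) ∈ Rmod p 1 := by
    constructor <;> simp
  rw [← hEq] at h1
  have := h1.2
  simp at this
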